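/- Let λ < 0. The vector field Y(u,v,w) = (w, λv − w², 2λw + v − λ²u) on ℝ³ arises from X = λI + H_{3,2} (with the map of formula (li) with a = 0, b = 1) via the polynomial change of coordinates φ(x₁,x₂,x₃) = (x₁, x₃ − λx₁², λx₁ + x₂ − x₁²); that is, Dφ(p)·X(p) = Y(φ(p)) for all p ∈ ℝ³. -/

import Mathlib

/-- φ pushes X = λI + H_{3,2} (a = 0, b = 1) forward to
Y(u,v,w) = (w, λv − w², 2λw + v − λ²u). -/
theorem stmt11 (l : ℝ) (hl : l < 0)
    (X Y φ : ℝ × ℝ × ℝ → ℝ × ℝ × ℝ)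
    (hX : ∀ p : ℝ × ℝ × ℝ, X p =
      (l * p.1 + (p.2.1 - p.1 ^ 2),
       l * p.2.1 + p.2.2 + 2 * p.1 * (p.2.1 - p.1 ^ 2),
       l * p.2.2 - (p.2.1 - p.1 ^ 2) ^ 2))
    (hY : ∀ p : ℝ × ℝ × ℝ, Y p =
      (p.2.2, l * p.2.1 - p.2.2 ^ 2, 2 * l * p.2.2 + p.2.1 - l ^ 2 * p.1))
    (hφ : ∀ p : ℝ × ℝ × ℝ, φ p =
      (p.1, p.2.2 - l * p.1 ^ 2, l * p.1 + p.2.1 - p.1 ^ 2)) :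
    ∀ p, fderiv ℝ φ p (X p) = Y (φ p) := by
  intro p
  have hφf : φ = fun p : ℝ × ℝ × ℝ =>
      (p.1, p.2.2 - l * p.1 ^ 2, l * p.1 + p.2.1 - p.1 ^ 2) := funext hφ
  subst hφf
  have h1 : HasFDerivAt (fun q : ℝ × ℝ × ℝ => q.1)
      (ContinuousLinearMap.fst ℝ ℝ (ℝ × ℝ)) p := hasFDerivAt_fst
  have h2 : HasFDerivAt (fun q : ℝ × ℝ × ℝ => q.2.1)
      ((ContinuousLinearMap.fst ℝ ℝ ℝ).comp (ContinuousLinearMap.snd ℝ ℝ (ℝ × ℝ))) p :=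
    hasFDerivAt_fst.comp p hasFDerivAt_snd
  have h3 : HasFDerivAt (fun q : ℝ × ℝ × ℝ => q.2.2)
      ((ContinuousLinearMap.snd ℝ ℝ ℝ).comp (ContinuousLinearMap.snd ℝ ℝ (ℝ × ℝ))) p :=
    hasFDerivAt_snd.comp p hasFDerivAt_snd
  have hc2 : HasFDerivAt (fun q : ℝ × ℝ × ℝ => q.2.2 - l * q.1 ^ 2)
      (((ContinuousLinearMap.snd ℝ ℝ ℝ).comp (ContinuousLinearMap.snd ℝ ℝ (ℝ × ℝ))) -
        (l * (2 * p.1)) • (ContinuousLinearMap.fst ℝ ℝ (ℝ × ℝ))) p := by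
    have hsq : HasFDerivAt (fun q : ℝ × ℝ × ℝ => q.1 ^ 2)
        ((2 * p.1) • (ContinuousLinearMap.fst ℝ ℝ (ℝ × ℝ))) p := by
      have hfun : (fun q : ℝ × ℝ × ℝ => q.1 ^ 2) = fun q => q.1 * q.1 := by
        funext q; ring
      rw [hfun]
      apply (h1.mul h1).congr_fderiv
      refine ContinuousLinearMap.ext fun v => ?_
      simp
      ring
    have := h3.sub (hsq.const_mul l)
    apply this.congr_fderiv
    refine ContinuousLinearMap.ext fun v => ?_
    simp [smul_smul]
  have hc3 : HasFDerivAt (fun q : ℝ × ℝ × ℝ => l * q.1 + q.2.1 - q.1 ^ 2)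
      ((l • (ContinuousLinearMap.fst ℝ ℝ (ℝ × ℝ)) +
        (ContinuousLinearMap.fst ℝ ℝ ℝ).comp (ContinuousLinearMap.snd ℝ ℝ (ℝ × ℝ))) -
        (2 * p.1) • (ContinuousLinearMap.fst ℝ ℝ (ℝ × ℝ))) p := by
    have hsq : HasFDerivAt (fun q : ℝ × ℝ × ℝ => q.1 ^ 2)
        ((2 * p.1) • (ContinuousLinearMap.fst ℝ ℝ (ℝ × ℝ))) p := by
      have hfun : (fun q : ℝ × ℝ × ℝ => q.1 ^ 2) = fun q => q.1 * q.1 := by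
        funext q; ring
      rw [hfun]
      apply (h1.mul h1).congr_fderiv
      refine ContinuousLinearMap.ext fun v => ?_
      simp
      ring
    exact ((h1.const_mul l).add h2).sub hsq
  have H := (h1.prodMk (hc2.prodMk hc3)).fderiv
  rw [H, hX, hY]
  simp [ContinuousLinearMap.prod_apply]
  constructor
  · ring
  constructor <;> ring
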